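/- Let α ∈ (0, √2 − 1) and let (x_n) ⊆ C, (y_n) ⊆ H, (λ_n) ⊆ (0, ∞) and (τ_n) ⊆ (0, 1] be sequences such that for all n ≥ 1: y_n = (1 + τ_n) x_n − τ_n x_{n−1}, x_{n+1} = P_C(x_n − λ_n F(y_n)), τ_n λ_n ≤ (1 + τ_{n−1}) λ_{n−1}, and for every z ∈ S the inequality ‖x_{n+1} − z‖² ≤ ‖x_n − z‖² − (1 − α(1+√2)) ‖x_n − y_n‖² − (1 − √2 α) ‖x_{n+1} − y_n‖² + α ‖x_n − y_{n−1}‖² − 2λ_n ⟨F(z), y_n − z⟩ holds. Then (x_n) is bounded, lim_{n→∞} ‖x_n − y_n‖ = 0, lim_{n→∞} ‖x_{n+1} − y_n‖ = 0, and lim_{n→∞} ‖x_{n+1} − x_n‖ = 0. -/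

import Mathlib

open RealInnerProductSpace

/-- Boundedness and asymptotic regularity for the nonstationary algorithm. -/
theorem bounded_and_asymptotic_regularity_modified
    {H : Type*} [NormedAddCommGroup H] [InnerProductSpace ℝ H] [CompleteSpace H]
    (C : Set H) (hC : C.Nonempty) (hCclosed : IsClosed C) (hCconv : Convex ℝ C)
    (P : H → H)
    (hPmem : ∀ u : H, P u ∈ C)
    (hPchar : ∀ u : H, ∀ y ∈ C, 0 ≤ ⟪P u - u, y - P u⟫)
    (F : H → H)
    (hmono : ∀ x y : H, 0 ≤ ⟪F x - F y, x - y⟫)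
    (hS : ∃ z ∈ C, ∀ w ∈ C, 0 ≤ ⟪F z, w - z⟫)
    (α : ℝ) (hα : α ∈ Set.Ioo (0 : ℝ) (Real.sqrt 2 - 1))
    (x y : ℕ → H) (lam : ℕ → ℝ) (τ : ℕ → ℝ)
    (hxC : ∀ n, x n ∈ C)
    (hlampos : ∀ n, 0 < lam n)
    (hτ : ∀ n, τ n ∈ Set.Ioc (0 : ℝ) 1)
    (hyrec : ∀ n : ℕ, 1 ≤ n → y n = (1 + τ n) • x n - τ n • x (n - 1))
    (hxrec : ∀ n : ℕ, 1 ≤ n → x (n + 1) = P (x n - lam n • F (y n)))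
    (hlamrec : ∀ n : ℕ, 1 ≤ n → τ n * lam n ≤ (1 + τ (n - 1)) * lam (n - 1))
    (hkey : ∀ n : ℕ, 1 ≤ n → ∀ z : H, z ∈ C → (∀ w ∈ C, 0 ≤ ⟪F z, w - z⟫) →
      ‖x (n + 1) - z‖ ^ 2 ≤
        ‖x n - z‖ ^ 2 - (1 - α * (1 + Real.sqrt 2)) * ‖x n - y n‖ ^ 2
          - (1 - Real.sqrt 2 * α) * ‖x (n + 1) - y n‖ ^ 2
          + α * ‖x n - y (n - 1)‖ ^ 2 - 2 * lam n * ⟪F z, y n - z⟫) :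
    Bornology.IsBounded (Set.range x) ∧
      Filter.Tendsto (fun n : ℕ => ‖x n - y n‖) Filter.atTop (nhds 0) ∧
      Filter.Tendsto (fun n : ℕ => ‖x (n + 1) - y n‖) Filter.atTop (nhds 0) ∧
      Filter.Tendsto (fun n : ℕ => ‖x (n + 1) - x n‖) Filter.atTop (nhds 0) := by
  obtain ⟨z, hzC, hz⟩ := hS
  have hs2 : Real.sqrt 2 ^ 2 = 2 := Real.sq_sqrt (by norm_num)
  have hsnn : 0 ≤ Real.sqrt 2 := Real.sqrt_nonneg 2
  have hα0 := hα.1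
  have hα1 := hα.2
  have hc : 0 < 1 - α * (1 + Real.sqrt 2) := by nlinarith
  set c := 1 - α * (1 + Real.sqrt 2) with hcdef
  set G : ℕ → ℝ := fun m => ‖x (m+1) - z‖^2 + α * ‖x (m+1) - y m‖^2
      + 2 * lam m * (1 + τ m) * ⟪F z, x m - z⟫ with hG
  have hpnn : ∀ m, 0 ≤ ⟪F z, x m - z⟫ := fun m => hz _ (hxC m)
  have hGnn : ∀ m, 0 ≤ G m := by
    intro m
    have h1 := sq_nonneg ‖x (m+1) - z‖
    have h2 := sq_nonneg ‖x (m+1) - y m‖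
    have h3 := hpnn m
    have h4 := (hlampos m).le
    have h5 := (hτ m).1.le
    have h6 : 0 ≤ α * ‖x (m+1) - y m‖^2 := mul_nonneg hα0.le h2
    have h7 : 0 ≤ 2 * lam m * (1 + τ m) * ⟪F z, x m - z⟫ :=
      mul_nonneg (mul_nonneg (by linarith) (by linarith)) h3
    simp only [hG]
    linarith
  set w : ℕ → ℝ := fun m => ‖x (m+1) - y (m+1)‖^2 + ‖x (m+1+1) - y (m+1)‖^2 with hw
  have hwnn : ∀ m, 0 ≤ w m := fun m => add_nonneg (sq_nonneg _) (sq_nonneg _)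
  have key : ∀ m, G (m+1) + c * w m ≤ G m := by
    intro m
    have hk := hkey (m+1) (Nat.le_add_left 1 m) z hzC hz
    simp only [Nat.add_sub_cancel] at hk
    have hy : y (m+1) - z = (1 + τ (m+1)) • (x (m+1) - z) - τ (m+1) • (x m - z) := by
      rw [hyrec (m+1) (Nat.le_add_left 1 m)]
      simp only [Nat.add_sub_cancel]
      module
    have hexp : ⟪F z, y (m+1) - z⟫
        = (1 + τ (m+1)) * ⟪F z, x (m+1) - z⟫ - τ (m+1) * ⟪F z, x m - z⟫ := by
      rw [hy, inner_sub_right, inner_smul_right, inner_smul_right]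
    have hlr := hlamrec (m+1) (Nat.le_add_left 1 m)
    simp only [Nat.add_sub_cancel] at hlr
    have hlam' : 2 * (τ (m+1) * lam (m+1)) * ⟪F z, x m - z⟫
        ≤ 2 * ((1 + τ m) * lam m) * ⟪F z, x m - z⟫ := by
      have := hpnn m
      nlinarith
    rw [hexp] at hk
    simp only [hG, hw, hcdef]
    nlinarith [hk, hlam']
  have hsum : ∀ N, (∑ m ∈ Finset.range N, c * w m) + G N ≤ G 0 := by
    intro N
    induction N with
    | zero => simp
    | succ N ih =>
      rw [Finset.sum_range_succ]
      have := key N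
      linarith
  have hGle : ∀ m, G m ≤ G 0 := by
    intro m
    have h1 := hsum m
    have h2 : 0 ≤ ∑ k ∈ Finset.range m, c * w k :=
      Finset.sum_nonneg fun k _ => mul_nonneg hc.le (hwnn k)
    linarith
  have hSummable : Summable (fun m => c * w m) := by
    apply summable_of_sum_range_le (c := G 0) (fun m => mul_nonneg hc.le (hwnn m))
    intro N
    have h1 := hsum N
    have h2 := hGnn N
    linarith
  have hw0 : Filter.Tendsto w Filter.atTop (nhds 0) := by
    have h := hSummable.tendsto_atTop_zero
    have heq : w = fun m => c⁻¹ * (c * w m) := by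
      funext m; field_simp
    rw [heq]
    simpa using h.const_mul c⁻¹
  have hu : Filter.Tendsto (fun m => ‖x (m+1) - y (m+1)‖^2) Filter.atTop (nhds 0) :=
    squeeze_zero (fun m => sq_nonneg _) (fun m => le_add_of_nonneg_right (sq_nonneg _)) hw0
  have hv : Filter.Tendsto (fun m => ‖x (m+1+1) - y (m+1)‖^2) Filter.atTop (nhds 0) :=
    squeeze_zero (fun m => sq_nonneg _) (fun m => le_add_of_nonneg_left (sq_nonneg _)) hw0
  have sq_to_norm : ∀ (f : ℕ → H), Filter.Tendsto (fun m => ‖f m‖^2) Filter.atTop (nhds 0) →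
      Filter.Tendsto (fun m => ‖f m‖) Filter.atTop (nhds 0) := by
    intro f hf
    have h := (Real.continuous_sqrt.tendsto 0).comp hf
    simp only [Real.sqrt_zero] at h
    have heq : (fun m => ‖f m‖) = fun m => Real.sqrt (‖f m‖^2) :=
      funext fun m => (Real.sqrt_sq (norm_nonneg _)).symm
    rw [heq]
    exact h
  have hu' : Filter.Tendsto (fun m => ‖x (m+1) - y (m+1)‖) Filter.atTop (nhds 0) :=
    sq_to_norm (fun m => x (m+1) - y (m+1)) hu
  have hv' : Filter.Tendsto (fun m => ‖x (m+1+1) - y (m+1)‖) Filter.atTop (nhds 0) :=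
    sq_to_norm (fun m => x (m+1+1) - y (m+1)) hv
  have tend1 : Filter.Tendsto (fun n : ℕ => ‖x n - y n‖) Filter.atTop (nhds 0) :=
    (Filter.tendsto_add_atTop_iff_nat 1).mp hu'
  have tend2 : Filter.Tendsto (fun n : ℕ => ‖x (n + 1) - y n‖) Filter.atTop (nhds 0) :=
    (Filter.tendsto_add_atTop_iff_nat 1).mp hv'
  have tend3 : Filter.Tendsto (fun n : ℕ => ‖x (n + 1) - x n‖) Filter.atTop (nhds 0) := by
    apply squeeze_zero (fun n => norm_nonneg _)
      (g := fun n => ‖x (n+1) - y n‖ + ‖x n - y n‖)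
    · intro n
      have h := dist_triangle (x (n+1)) (y n) (x n)
      simp only [dist_eq_norm] at h
      rw [norm_sub_rev (y n) (x n)] at h
      exact h
    · simpa using tend2.add tend1
  refine ⟨?_, tend1, tend2, tend3⟩
  have hxb : ∀ m, ‖x (m+1) - z‖ ≤ Real.sqrt (G 0) := by
    intro m
    have h1 : ‖x (m+1) - z‖^2 ≤ G m := by
      have h2 := sq_nonneg ‖x (m+1) - y m‖
      have h3 := hpnn m
      have h4 := (hlampos m).le
      have h5 := (hτ m).1.le
      have h6 : 0 ≤ α * ‖x (m+1) - y m‖^2 := mul_nonneg hα0.le h2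
      have h7 : 0 ≤ 2 * lam m * (1 + τ m) * ⟪F z, x m - z⟫ :=
        mul_nonneg (mul_nonneg (by linarith) (by linarith)) h3
      simp only [hG]
      linarith
    have h6 : ‖x (m+1) - z‖^2 ≤ G 0 := le_trans h1 (hGle m)
    calc ‖x (m+1) - z‖ = Real.sqrt (‖x (m+1) - z‖^2) := (Real.sqrt_sq (norm_nonneg _)).symm
      _ ≤ Real.sqrt (G 0) := Real.sqrt_le_sqrt h6
  apply (Metric.isBounded_closedBall (x := z) (r := max ‖x 0 - z‖ (Real.sqrt (G 0)))).subset
  rintro _ ⟨n, rfl⟩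
  simp only [Metric.mem_closedBall, dist_eq_norm]
  cases n with
  | zero => exact le_max_left _ _
  | succ m => exact le_trans (hxb m) (le_max_right _ _)
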